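/- arXiv:2105.05579 — 3 statements merged into one kernel-verified Lean document; each statement's English description precedes it below -/
import Mathlib

section
/- Let d ≥ 2 and λ < 0. Then there exists a constant C > 0 such that for every measurable function g : ℝ^{d-1} → ℂ one has ∫_{ℝ^{d-1}} ∫_ℝ (1 + |k|² + t²) · |g(k)|² / (|k|² + t² − λ)² dt dk ≤ C · ∫_{ℝ^{d-1}} (1 + |k|²)^{−1/2} · |g(k)|² dk, where both sides are interpreted as (possibly infinite) integrals of nonnegative functions. -/
open MeasureTheory

lemma aux_integrable_inv_const_add_sq {m : ℝ} (hm : 0 < m) :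
    Integrable (fun t : ℝ => (m + t ^ 2)⁻¹) := by
  have h : (fun t : ℝ => (m + t ^ 2)⁻¹)
      = fun t : ℝ => m⁻¹ * (1 + ((Real.sqrt m)⁻¹ * t) ^ 2)⁻¹ := by
    funext t
    have hs : Real.sqrt m ^ 2 = m := Real.sq_sqrt hm.le
    rw [mul_pow, ← mul_inv, inv_pow, mul_add, mul_one]
    congr 2
    field_simp [hs]
    rw [hs]
  rw [h]
  exact (integrable_inv_one_add_sq.comp_mul_left'
    (by positivity : (Real.sqrt m)⁻¹ ≠ 0)).const_mul _

lemma aux_integral_inv_const_add_sq {m : ℝ} (hm : 0 < m) :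
    ∫ t : ℝ, (m + t ^ 2)⁻¹ = Real.pi / Real.sqrt m := by
  have hs : Real.sqrt m ^ 2 = m := Real.sq_sqrt hm.le
  have hs0 : 0 < Real.sqrt m := Real.sqrt_pos.mpr hm
  have h : (fun t : ℝ => (m + t ^ 2)⁻¹)
      = fun t : ℝ => m⁻¹ * (1 + ((Real.sqrt m)⁻¹ * t) ^ 2)⁻¹ := by
    funext t
    rw [mul_pow, ← mul_inv, inv_pow, mul_add, mul_one]
    congr 2
    field_simp [hs]
    rw [hs]
  rw [h, MeasureTheory.integral_const_mul,
    MeasureTheory.Measure.integral_comp_mul_left (fun x => (1 + x ^ 2)⁻¹) (Real.sqrt m)⁻¹,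
    integral_univ_inv_one_add_sq, inv_inv, abs_of_pos hs0, smul_eq_mul]
  field_simp
  nlinarith [hs, Real.pi_pos]

lemma aux_lintegral_inv_const_add_sq {m : ℝ} (hm : 0 < m) :
    ∫⁻ t : ℝ, ENNReal.ofReal ((m + t ^ 2)⁻¹) = ENNReal.ofReal (Real.pi / Real.sqrt m) := by
  rw [← aux_integral_inv_const_add_sq hm]
  exact (MeasureTheory.ofReal_integral_eq_lintegral_ofReal
    (aux_integrable_inv_const_add_sq hm)
    (Filter.Eventually.of_forall fun t => by positivity)).symm

/-- for `d ≥ 2` and `λ < 0` there is a constant `C > 0` such that for every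
measurable `g : ℝ^{d-1} → ℂ` the weighted-integral inequality
`∫∫ (1+|k|²+t²)|g(k)|²/(|k|²+t²−λ)² dt dk ≤ C ∫ (1+|k|²)^{-1/2}|g(k)|² dk`
holds, both sides interpreted as (possibly infinite) integrals of nonnegative functions. -/
theorem poisson_operator_bounded (d : ℕ) (hd : 2 ≤ d) (lam : ℝ) (hlam : lam < 0) :
    ∃ C > 0, ∀ g : EuclideanSpace ℝ (Fin (d - 1)) → ℂ, Measurable g →
      ∫⁻ k : EuclideanSpace ℝ (Fin (d - 1)), ∫⁻ t : ℝ,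
          ENNReal.ofReal ((1 + ‖k‖ ^ 2 + t ^ 2) * ‖g k‖ ^ 2 / (‖k‖ ^ 2 + t ^ 2 - lam) ^ 2)
        ≤ ENNReal.ofReal C *
          ∫⁻ k : EuclideanSpace ℝ (Fin (d - 1)),
            ENNReal.ofReal ((1 + ‖k‖ ^ 2) ^ (-(1 : ℝ) / 2) * ‖g k‖ ^ 2) := by
  set c : ℝ := min 1 (-lam) with hc_def
  have hc0 : 0 < c := lt_min one_pos (by linarith)
  have hc1 : c ≤ 1 := min_le_left _ _
  have hclam : c ≤ -lam := min_le_right _ _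
  refine ⟨Real.pi / (c * Real.sqrt c), by positivity, fun g hg => ?_⟩
  have key : ∀ k : EuclideanSpace ℝ (Fin (d - 1)),
      (∫⁻ t : ℝ, ENNReal.ofReal
          ((1 + ‖k‖ ^ 2 + t ^ 2) * ‖g k‖ ^ 2 / (‖k‖ ^ 2 + t ^ 2 - lam) ^ 2))
        ≤ ENNReal.ofReal (Real.pi / (c * Real.sqrt c)) *
          ENNReal.ofReal ((1 + ‖k‖ ^ 2) ^ (-(1 : ℝ) / 2) * ‖g k‖ ^ 2) := by
    intro k
    set a : ℝ := ‖k‖ ^ 2 with ha_def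
    have ha0 : 0 ≤ a := sq_nonneg _
    set G : ℝ := ‖g k‖ ^ 2 with hG_def
    have hG0 : 0 ≤ G := sq_nonneg _
    set m : ℝ := c * (1 + a) with hm_def
    have hm0 : 0 < m := by positivity
    -- pointwise bound
    have hpt : ∀ t : ℝ, (1 + a + t ^ 2) * G / (a + t ^ 2 - lam) ^ 2
        ≤ G * c⁻¹ * (m + t ^ 2)⁻¹ := by
      intro t
      have h1 : c * (1 + a + t ^ 2) ≤ a + t ^ 2 - lam := by nlinarith [sq_nonneg t]
      have h2 : m + t ^ 2 ≤ a + t ^ 2 - lam := by nlinarith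
      have hden : 0 < a + t ^ 2 - lam := by nlinarith [sq_nonneg t]
      have hnum : 0 < 1 + a + t ^ 2 := by positivity
      have hden2 : c * (1 + a + t ^ 2) * (m + t ^ 2) ≤ (a + t ^ 2 - lam) ^ 2 := by
        calc c * (1 + a + t ^ 2) * (m + t ^ 2)
            ≤ (a + t ^ 2 - lam) * (a + t ^ 2 - lam) :=
              mul_le_mul h1 h2 (by positivity) hden.le
          _ = (a + t ^ 2 - lam) ^ 2 := (sq _).symm
      have hd2 : 0 < c * (1 + a + t ^ 2) * (m + t ^ 2) := by positivity
      calc (1 + a + t ^ 2) * G / (a + t ^ 2 - lam) ^ 2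
          ≤ (1 + a + t ^ 2) * G / (c * (1 + a + t ^ 2) * (m + t ^ 2)) :=
            div_le_div_of_nonneg_left (by positivity) hd2 hden2
        _ = G * c⁻¹ * (m + t ^ 2)⁻¹ := by
            field_simp
    calc (∫⁻ t : ℝ, ENNReal.ofReal
            ((1 + a + t ^ 2) * G / (a + t ^ 2 - lam) ^ 2))
        ≤ ∫⁻ t : ℝ, ENNReal.ofReal (G * c⁻¹) * ENNReal.ofReal ((m + t ^ 2)⁻¹) := by
          refine lintegral_mono fun t => ?_
          rw [← ENNReal.ofReal_mul (by positivity)]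
          exact ENNReal.ofReal_le_ofReal (hpt t)
      _ = ENNReal.ofReal (G * c⁻¹) * ENNReal.ofReal (Real.pi / Real.sqrt m) := by
          rw [lintegral_const_mul' _ _ ENNReal.ofReal_ne_top,
            aux_lintegral_inv_const_add_sq hm0]
      _ = ENNReal.ofReal (Real.pi / (c * Real.sqrt c)) *
            ENNReal.ofReal ((1 + a) ^ (-(1 : ℝ) / 2) * G) := by
          rw [← ENNReal.ofReal_mul (by positivity),
            ← ENNReal.ofReal_mul (by positivity)]
          congr 1
          have h1a : (0 : ℝ) < 1 + a := by positivity
          have hrp : (1 + a) ^ (-(1 : ℝ) / 2) = (Real.sqrt (1 + a))⁻¹ := by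
            rw [neg_div, Real.rpow_neg h1a.le, Real.sqrt_eq_rpow]
          have hsm : Real.sqrt m = Real.sqrt c * Real.sqrt (1 + a) := by
            rw [hm_def, Real.sqrt_mul hc0.le]
          rw [hrp, hsm]
          have hs1 : 0 < Real.sqrt c := Real.sqrt_pos.mpr hc0
          have hs2 : 0 < Real.sqrt (1 + a) := Real.sqrt_pos.mpr h1a
          field_simp
  calc (∫⁻ k : EuclideanSpace ℝ (Fin (d - 1)), ∫⁻ t : ℝ,
        ENNReal.ofReal ((1 + ‖k‖ ^ 2 + t ^ 2) * ‖g k‖ ^ 2 / (‖k‖ ^ 2 + t ^ 2 - lam) ^ 2))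
      ≤ ∫⁻ k : EuclideanSpace ℝ (Fin (d - 1)),
          ENNReal.ofReal (Real.pi / (c * Real.sqrt c)) *
            ENNReal.ofReal ((1 + ‖k‖ ^ 2) ^ (-(1 : ℝ) / 2) * ‖g k‖ ^ 2) :=
        lintegral_mono key
    _ = ENNReal.ofReal (Real.pi / (c * Real.sqrt c)) *
          ∫⁻ k : EuclideanSpace ℝ (Fin (d - 1)),
            ENNReal.ofReal ((1 + ‖k‖ ^ 2) ^ (-(1 : ℝ) / 2) * ‖g k‖ ^ 2) :=
        lintegral_const_mul' _ _ ENNReal.ofReal_ne_top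
end

section
/- Let d ≥ 2, λ < 0, and let φ : ℝ^{d-1} → ℂ be a Schwartz function. Define m : ℝ^{d-1} × ℝ → ℂ by m(k,t) := (𝓕_{d-1} φ)(k) / (4π²(|k|² + t²) − λ). Then m is integrable on ℝ^d, the function k ↦ (𝓕_{d-1} φ)(k) / (2·√(4π²|k|² − λ)) is integrable on ℝ^{d-1}, and for every x ∈ ℝ^{d-1} one has (𝓕_d^{-1} m)(x, 0) = 𝓕_{d-1}^{-1}[ k ↦ (𝓕_{d-1} φ)(k) / (2·√(4π²|k|² − λ)) ](x). -/
open MeasureTheory Real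
open scoped FourierTransform

lemma key_integrable {a : ℝ} (ha : 0 < a) :
    Integrable (fun t : ℝ => (a + 4 * π ^ 2 * t ^ 2)⁻¹) := by
  have hc : (0:ℝ) < min a (4 * π ^ 2) := lt_min ha (by positivity)
  have hcont : Continuous (fun t : ℝ => (a + 4 * π ^ 2 * t ^ 2)⁻¹) := by
    apply Continuous.inv₀ (by continuity)
    intro t; positivity
  refine Integrable.mono' ((integrable_inv_one_add_sq.const_mul ((min a (4 * π ^ 2))⁻¹)))
    hcont.aestronglyMeasurable (Filter.Eventually.of_forall fun t => ?_)
  rw [Real.norm_eq_abs, abs_of_pos (by positivity)]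
  rw [← mul_inv]
  apply inv_anti₀ (by positivity)
  have h1 : min a (4 * π ^ 2) * (1 + t ^ 2) = min a (4 * π ^ 2) + min a (4 * π ^ 2) * t ^ 2 := by ring
  rw [h1]
  gcongr
  · exact min_le_left _ _
  · exact min_le_right _ _

lemma key_integral {a : ℝ} (ha : 0 < a) :
    (∫ t : ℝ, (a + 4 * π ^ 2 * t ^ 2)⁻¹) = 1 / (2 * Real.sqrt a) := by
  have hs : (0:ℝ) < Real.sqrt a := Real.sqrt_pos.2 ha
  have hsq : Real.sqrt a ^ 2 = a := Real.sq_sqrt ha.le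
  have h1 : ∀ t : ℝ, (a + 4 * π ^ 2 * t ^ 2)⁻¹
      = a⁻¹ * (1 + ((2 * π / Real.sqrt a) * t) ^ 2)⁻¹ := by
    intro t
    rw [← mul_inv]
    congr 1
    field_simp
    rw [hsq]; ring
  simp_rw [h1]
  rw [MeasureTheory.integral_const_mul]
  rw [MeasureTheory.Measure.integral_comp_mul_left (fun s : ℝ => (1 + s ^ 2)⁻¹) (2 * π / Real.sqrt a)]
  rw [integral_univ_inv_one_add_sq]
  rw [smul_eq_mul, abs_of_pos (by positivity)]
  have hpi : (0:ℝ) < π := Real.pi_pos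
  rw [show ((2 * π / Real.sqrt a)⁻¹ : ℝ) = Real.sqrt a / (2 * π) by field_simp]
  rw [← hsq]
  field_simp
  nlinarith [hsq, hs, Real.sq_sqrt (sq_nonneg (Real.sqrt a))]

lemma ofReal_integral_c (g : ℝ → ℝ) :
    (∫ t : ℝ, ((g t : ℝ) : ℂ)) = ((∫ t : ℝ, g t : ℝ) : ℂ) := integral_ofReal



open MeasureTheory Real
open scoped FourierTransform

/-- The inverse Fourier transform on the product space `ℝ^{d-1} × ℝ` (with its product
Lebesgue measure and the natural inner product `⟪x,k⟫ + s·t` of the orthogonal direct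
sum), with Mathlib's kernel convention `e^{+2πi⟨z,p⟩}`. -/
noncomputable def fourierTransformInvProd {n : ℕ}
    (v : (EuclideanSpace ℝ (Fin n)) × ℝ → ℂ) :
    (EuclideanSpace ℝ (Fin n)) × ℝ → ℂ :=
  fun p => ∫ z : (EuclideanSpace ℝ (Fin n)) × ℝ,
    Complex.exp (((2 * π * ((inner ℝ z.1 p.1 : ℝ) + z.2 * p.2) : ℝ) : ℂ) * Complex.I) * v z

/-- for `d ≥ 2`, `λ < 0` and a Schwartz function `φ` on `ℝ^{d-1}`, the
function `m(k,t) = 𝓕φ(k)/(4π²(|k|²+t²) − λ)` is integrable on `ℝ^d`, the function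
`k ↦ 𝓕φ(k)/(2√(4π²|k|² − λ))` is integrable on `ℝ^{d-1}`, and the trace of `𝓕⁻¹m` on
the hyperplane `{x_d = 0}` equals the inverse Fourier transform of the latter function:
the Fourier-space form of the trace formula `τ_D γ(λ) = (1/2)(−Δ−λ)^{−1/2}`. -/
theorem poisson_trace_formula (d : ℕ) (hd : 2 ≤ d) (lam : ℝ) (hlam : lam < 0)
    (φ : SchwartzMap (EuclideanSpace ℝ (Fin (d - 1))) ℂ) :
    Integrable (fun p : (EuclideanSpace ℝ (Fin (d - 1))) × ℝ =>
        𝓕 (φ : EuclideanSpace ℝ (Fin (d - 1)) → ℂ) p.1 /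
          (((4 * π ^ 2 * (‖p.1‖ ^ 2 + p.2 ^ 2) - lam : ℝ) : ℂ))) ∧
      Integrable (fun k : EuclideanSpace ℝ (Fin (d - 1)) =>
        𝓕 (φ : EuclideanSpace ℝ (Fin (d - 1)) → ℂ) k /
          (((2 * Real.sqrt (4 * π ^ 2 * ‖k‖ ^ 2 - lam) : ℝ) : ℂ))) ∧
      ∀ x : EuclideanSpace ℝ (Fin (d - 1)),
        fourierTransformInvProd (fun p : (EuclideanSpace ℝ (Fin (d - 1))) × ℝ =>
            𝓕 (φ : EuclideanSpace ℝ (Fin (d - 1)) → ℂ) p.1 /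
              (((4 * π ^ 2 * (‖p.1‖ ^ 2 + p.2 ^ 2) - lam : ℝ) : ℂ))) (x, 0)
          = 𝓕⁻ (fun k : EuclideanSpace ℝ (Fin (d - 1)) =>
              𝓕 (φ : EuclideanSpace ℝ (Fin (d - 1)) → ℂ) k /
                (((2 * Real.sqrt (4 * π ^ 2 * ‖k‖ ^ 2 - lam) : ℝ) : ℂ))) x := by
  set E := EuclideanSpace ℝ (Fin (d - 1))
  set f : E → ℂ := 𝓕 (φ : E → ℂ) with hf
  have hfS : (⇑(SchwartzMap.fourierTransformCLM ℂ φ) : E → ℂ) = f :=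
    rfl
  have hfInt : Integrable f := hfS ▸ (SchwartzMap.fourierTransformCLM ℂ φ).integrable
  have hfCont : Continuous f := hfS ▸ (SchwartzMap.fourierTransformCLM ℂ φ).continuous
  have hlam' : (0:ℝ) < -lam := by linarith
  -- positivity of denominators
  have hden : ∀ p : E × ℝ, (0:ℝ) < 4 * π ^ 2 * (‖p.1‖ ^ 2 + p.2 ^ 2) - lam := by
    intro p
    have : (0:ℝ) ≤ 4 * π ^ 2 * (‖p.1‖ ^ 2 + p.2 ^ 2) := by positivity
    linarith
  have hA : ∀ k : E, (0:ℝ) < 4 * π ^ 2 * ‖k‖ ^ 2 - lam := by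
    intro k
    have : (0:ℝ) ≤ 4 * π ^ 2 * ‖k‖ ^ 2 := by positivity
    linarith
  -- Integrability 1
  have hmeas1 : AEStronglyMeasurable
      (fun p : E × ℝ => f p.1 / ((4 * π ^ 2 * (‖p.1‖ ^ 2 + p.2 ^ 2) - lam : ℝ) : ℂ)) volume := by
    apply Continuous.aestronglyMeasurable
    apply Continuous.div (hfCont.comp continuous_fst)
    · exact Complex.continuous_ofReal.comp (by fun_prop)
    · intro p
      exact Complex.ofReal_ne_zero.2 (hden p).ne'
  have hg : Integrable (fun p : E × ℝ => ‖f p.1‖ * (-lam + 4 * π ^ 2 * p.2 ^ 2)⁻¹) volume := by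
    rw [MeasureTheory.Measure.volume_eq_prod]
    exact Integrable.mul_prod hfInt.norm (key_integrable hlam')
  have hbound1 : ∀ p : E × ℝ,
      ‖f p.1 / ((4 * π ^ 2 * (‖p.1‖ ^ 2 + p.2 ^ 2) - lam : ℝ) : ℂ)‖
        ≤ ‖f p.1‖ * (-lam + 4 * π ^ 2 * p.2 ^ 2)⁻¹ := by
    intro p
    rw [norm_div, Complex.norm_real, Real.norm_eq_abs, abs_of_pos (hden p), div_eq_mul_inv]
    apply mul_le_mul_of_nonneg_left _ (norm_nonneg _)
    apply inv_anti₀ (by positivity)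
    nlinarith [sq_nonneg ‖p.1‖, Real.pi_pos]
  have hInt1 : Integrable (fun p : E × ℝ =>
      f p.1 / ((4 * π ^ 2 * (‖p.1‖ ^ 2 + p.2 ^ 2) - lam : ℝ) : ℂ)) volume :=
    hg.mono' hmeas1 (Filter.Eventually.of_forall hbound1)
  -- Integrability 2
  have hmeas2 : AEStronglyMeasurable
      (fun k : E => f k / ((2 * Real.sqrt (4 * π ^ 2 * ‖k‖ ^ 2 - lam) : ℝ) : ℂ)) volume := by
    apply Continuous.aestronglyMeasurable
    apply hfCont.div
    · exact Complex.continuous_ofReal.comp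
        (continuous_const.mul (Real.continuous_sqrt.comp (by fun_prop)))
    · intro k
      have hs := Real.sqrt_pos.2 (hA k)
      exact Complex.ofReal_ne_zero.2 (by positivity)
  have hbound2 : ∀ k : E,
      ‖f k / ((2 * Real.sqrt (4 * π ^ 2 * ‖k‖ ^ 2 - lam) : ℝ) : ℂ)‖
        ≤ (2 * Real.sqrt (-lam))⁻¹ * ‖f k‖ := by
    intro k
    have hs := Real.sqrt_pos.2 (hA k)
    have hs' := Real.sqrt_pos.2 hlam'
    rw [norm_div, Complex.norm_real, Real.norm_eq_abs, abs_of_pos (by positivity),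
      div_eq_mul_inv, mul_comm]
    apply mul_le_mul_of_nonneg_right _ (norm_nonneg _)
    apply inv_anti₀ (by positivity)
    have : Real.sqrt (-lam) ≤ Real.sqrt (4 * π ^ 2 * ‖k‖ ^ 2 - lam) :=
      Real.sqrt_le_sqrt (by nlinarith [sq_nonneg ‖k‖, Real.pi_pos])
    linarith
  have hInt2 : Integrable (fun k : E =>
      f k / ((2 * Real.sqrt (4 * π ^ 2 * ‖k‖ ^ 2 - lam) : ℝ) : ℂ)) volume :=
    (hfInt.norm.const_mul _).mono' hmeas2 (Filter.Eventually.of_forall hbound2)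
  refine ⟨hInt1, hInt2, fun x => ?_⟩
  -- the main equality
  unfold fourierTransformInvProd
  simp only [mul_zero, add_zero]
  have hFint : Integrable (fun z : E × ℝ =>
      Complex.exp (((2 * π * (inner ℝ z.1 x : ℝ) : ℝ) : ℂ) * Complex.I) *
        (f z.1 / ((4 * π ^ 2 * (‖z.1‖ ^ 2 + z.2 ^ 2) - lam : ℝ) : ℂ))) volume := by
    apply hInt1.bdd_mul (c := 1)
    · apply Continuous.aestronglyMeasurable
      apply Complex.continuous_exp.comp
      apply Continuous.mul _ continuous_const
      exact Complex.continuous_ofReal.comp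
        (continuous_const.mul (continuous_fst.inner continuous_const))
    · exact Filter.Eventually.of_forall fun z => le_of_eq (Complex.norm_exp_ofReal_mul_I _)
  rw [MeasureTheory.Measure.volume_eq_prod]
  rw [MeasureTheory.Measure.volume_eq_prod] at hFint
  rw [MeasureTheory.integral_prod _ hFint]
  rw [Real.fourierInv_eq']
  apply integral_congr_ae
  filter_upwards with k
  have hrw : ∀ t : ℝ, ((4 * π ^ 2 * (‖k‖ ^ 2 + t ^ 2) - lam : ℝ) : ℂ)
      = (((4 * π ^ 2 * ‖k‖ ^ 2 - lam) + 4 * π ^ 2 * t ^ 2 : ℝ) : ℂ) := by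
    intro t; norm_cast; ring
  simp only [hrw]
  simp only [div_eq_mul_inv, ← Complex.ofReal_inv]
  rw [MeasureTheory.integral_const_mul, MeasureTheory.integral_const_mul,
    ofReal_integral_c, key_integral (hA k), smul_eq_mul]
  push_cast
  ring
end

section
/- Let m ≥ 1 and for t > 0 let φ_t : ℝ^m → ℝ denote the heat kernel φ_t(x) := (4πt)^{−m/2} e^{−|x|²/(4t)}. Then there exists a constant c > 0 (independent of φ and t) such that for every Schwartz function φ : ℝ^m → ℂ and every t > 0 one has ‖φ − φ_t * φ‖²_{L²(ℝ^m)} ≤ c² · √t · ∫_{ℝ^m} (1 + |k|²)^{1/2} · |(𝓕_m φ)(k)|² dk. -/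
set_option maxHeartbeats 1000000


open MeasureTheory Real
open scoped FourierTransform ENNReal

namespace HeatMollify
open MeasureTheory Real Complex
open scoped FourierTransform RealInnerProductSpace ENNReal

variable {V : Type*} [NormedAddCommGroup V] [InnerProductSpace ℝ V]
  [MeasurableSpace V] [BorelSpace V] [FiniteDimensional ℝ V]

set_option linter.unusedSectionVars false

lemma econt (ξ : V) : Continuous fun v : V => Complex.exp (↑(-2 * π * ⟪v, ξ⟫) * Complex.I) := by
  have h : Continuous fun v : V => ⟪v, ξ⟫ := continuous_id.inner continuous_const
  exact Complex.continuous_exp.comp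
    ((Complex.continuous_ofReal.comp (continuous_const.mul h)).mul continuous_const)

lemma enorm (ξ v : V) : ‖Complex.exp (↑(-2 * π * ⟪v, ξ⟫) * Complex.I)‖ = 1 := by
  exact Complex.norm_exp_ofReal_mul_I _

lemma fourier_conv {f g : V → ℂ} (hf : Integrable f) (hg : Integrable g) (ξ : V) :
    𝓕 (fun x => ∫ y, f y * g (x - y)) ξ = 𝓕 f ξ * 𝓕 g ξ := by
  set e : V → ℂ := fun v => Complex.exp (↑(-2 * π * ⟪v, ξ⟫) * Complex.I) with he
  have hF : Integrable (fun p : V × V => f p.2 * g (p.1 - p.2))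
      ((volume : Measure V).prod volume) := by
    simpa using hf.convolution_integrand (ContinuousLinearMap.mul ℝ ℂ) hg
  have hFe : Integrable (fun p : V × V => e p.1 * (f p.2 * g (p.1 - p.2)))
      ((volume : Measure V).prod volume) :=
    hF.bdd_mul ((econt ξ).comp continuous_fst).aestronglyMeasurable
      (c := 1) (Filter.Eventually.of_forall fun p => le_of_eq (enorm ξ p.1))
  have hmul : ∀ x y : V, e (x + y) = e x * e y := by
    intro x y
    simp only [he, ← Complex.exp_add]
    congr 1
    push_cast [inner_add_left]
    ring
  calc 𝓕 (fun x => ∫ y, f y * g (x - y)) ξ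
      = ∫ x, e x * ∫ y, f y * g (x - y) := by
        rw [Real.fourier_eq']; simp only [smul_eq_mul]; rfl
    _ = ∫ x, ∫ y, e x * (f y * g (x - y)) := by
        congr 1 with x; exact (integral_const_mul _ _).symm
    _ = ∫ y, ∫ x, e x * (f y * g (x - y)) := integral_integral_swap hFe
    _ = ∫ y, (e y * f y) * 𝓕 g ξ := by
        congr 1 with y
        calc ∫ x, e x * (f y * g (x - y))
            = ∫ x, e (x + y) * (f y * g x) := by
              rw [← integral_add_right_eq_self (fun x => e x * (f y * g (x - y))) y]
              simp
          _ = ∫ x, (e y * f y) * (e x * g x) := by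
              congr 1 with x; rw [hmul]; ring
          _ = (e y * f y) * ∫ x, e x * g x := integral_const_mul _ _
          _ = (e y * f y) * 𝓕 g ξ := by
              rw [Real.fourier_eq']; simp only [smul_eq_mul]; rfl
    _ = (∫ y, e y * f y) * 𝓕 g ξ := by rw [← integral_mul_const]
    _ = 𝓕 f ξ * 𝓕 g ξ := by
        rw [Real.fourier_eq' f]; simp only [smul_eq_mul]; rfl
lemma norm_le_of_inv {f : V → ℂ} (hc : Continuous f) (hf : Integrable f)
    (h'f : Integrable (𝓕 f)) (x : V) : ‖f x‖ ≤ ∫ ξ, ‖𝓕 f ξ‖ := by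
  rw [← hf.fourierInv_fourier_eq h'f hc.continuousAt,
    Real.fourierInv_eq_fourier_neg]
  exact VectorFourier.norm_fourierIntegral_le_integral_norm _ _ _ _ _

lemma sq_integrable {f : V → ℂ} (hc : Continuous f) (hf : Integrable f)
    (h'f : Integrable (𝓕 f)) : Integrable (fun x => ‖f x‖ ^ 2) := by
  refine (hf.norm.const_mul (∫ ξ, ‖𝓕 f ξ‖)).mono'
    ((hc.norm.pow 2).aestronglyMeasurable) ?_
  filter_upwards with x
  rw [Real.norm_of_nonneg (by positivity), pow_two]
  exact mul_le_mul_of_nonneg_right (norm_le_of_inv hc hf h'f x) (norm_nonneg _)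

lemma mul_conj_eq (z : ℂ) : z * (starRingEnd ℂ) z = ((‖z‖ ^ 2 : ℝ) : ℂ) := by
  rw [Complex.mul_conj]
  norm_cast
  rw [Complex.normSq_eq_norm_sq]

lemma plancherel {f : V → ℂ} (hc : Continuous f) (hf : Integrable f)
    (h'f : Integrable (𝓕 f)) : ∫ x, ‖f x‖ ^ 2 = ∫ ξ, ‖𝓕 f ξ‖ ^ 2 := by
  set E : V × V → ℂ := fun p => Complex.exp (↑(2 * π * ⟪p.2, p.1⟫) * Complex.I) with hE
  have hEcont : Continuous E := by
    have h : Continuous fun p : V × V => ⟪p.2, p.1⟫ :=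
      continuous_snd.inner continuous_fst
    exact Complex.continuous_exp.comp
      ((Complex.continuous_ofReal.comp (continuous_const.mul h)).mul continuous_const)
  have hconj : Integrable (fun x => (starRingEnd ℂ) (f x)) := by
    refine hf.norm.mono' ((continuous_star.comp hc).aestronglyMeasurable) ?_
    filter_upwards with x
    simp
  have hprod : Integrable (fun p : V × V => E p * (𝓕 f p.1 * (starRingEnd ℂ) (f p.2)))
      ((volume : Measure V).prod volume) := by
    refine (h'f.mul_prod hconj).bdd_mul (c := 1) hEcont.aestronglyMeasurable
      (Filter.Eventually.of_forall fun p => ?_)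
    simp only [hE]; exact le_of_eq (Complex.norm_exp_ofReal_mul_I _)
  have hconjft : ∀ ξ : V, (starRingEnd ℂ) (𝓕 f ξ) =
      ∫ x, Complex.exp (↑(2 * π * ⟪x, ξ⟫) * Complex.I) * (starRingEnd ℂ) (f x) := by
    intro ξ
    rw [Real.fourier_eq', ← integral_conj]
    congr 1 with x
    simp only [smul_eq_mul, map_mul, ← Complex.exp_conj, Complex.conj_I, Complex.conj_ofReal]
    congr 2
    push_cast
    ring
  have key : ∫ ξ, 𝓕 f ξ * (starRingEnd ℂ) (𝓕 f ξ) = ∫ x, f x * (starRingEnd ℂ) (f x) := by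
    calc ∫ ξ, 𝓕 f ξ * (starRingEnd ℂ) (𝓕 f ξ)
        = ∫ ξ, ∫ x, E (ξ, x) * (𝓕 f ξ * (starRingEnd ℂ) (f x)) := by
          congr 1 with ξ
          rw [hconjft ξ, ← integral_const_mul]
          congr 1 with x
          simp only [hE]
          ring
      _ = ∫ x, ∫ ξ, E (ξ, x) * (𝓕 f ξ * (starRingEnd ℂ) (f x)) := by
          apply integral_integral_swap
          exact hprod
      _ = ∫ x, (starRingEnd ℂ) (f x) * 𝓕⁻ (𝓕 f) x := by
          congr 1 with x
          rw [Real.fourierInv_eq', ← integral_const_mul]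
          congr 1 with ξ
          simp only [hE, smul_eq_mul]
          rw [real_inner_comm ξ x]
          ring
      _ = ∫ x, f x * (starRingEnd ℂ) (f x) := by
          congr 1 with x
          rw [hf.fourierInv_fourier_eq h'f hc.continuousAt]
          ring
  have : (∫ ξ, ((‖𝓕 f ξ‖ ^ 2 : ℝ) : ℂ)) = ∫ x, ((‖f x‖ ^ 2 : ℝ) : ℂ) := by
    simp_rw [← mul_conj_eq]
    exact key
  have hcast : ∀ g : V → ℝ, (∫ x, ((g x : ℝ) : ℂ)) = ((∫ x, g x : ℝ) : ℂ) := by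
    intro g
    have := Complex.ofRealLI.integral_comp_comm (μ := (volume : Measure V)) g
    exact integral_ofReal
  rw [hcast, hcast] at this
  exact_mod_cast this.symm
lemma fourier_sub {f g : V → ℂ} (hf : Integrable f) (hg : Integrable g) (ξ : V) :
    𝓕 (fun x => f x - g x) ξ = 𝓕 f ξ - 𝓕 g ξ := by
  rw [Real.fourier_eq, Real.fourier_eq, Real.fourier_eq,
    ← integral_sub ((Real.fourierIntegral_convergent_iff ξ).2 hf)
      ((Real.fourierIntegral_convergent_iff ξ).2 hg)]
  congr 1 with x
  rw [← smul_sub]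

lemma one_sub_exp_sq_le {s : ℝ} (hs : 0 ≤ s) : (1 - rexp (-s)) ^ 2 ≤ Real.sqrt s := by
  have h0 : 0 ≤ 1 - rexp (-s) := by
    have : rexp (-s) ≤ 1 := Real.exp_le_one_iff.mpr (by linarith)
    linarith
  have h1 : 1 - rexp (-s) ≤ 1 := by linarith [Real.exp_pos (-s)]
  have h2 : 1 - rexp (-s) ≤ s := by linarith [Real.add_one_le_exp (-s)]
  rcases le_total s 1 with h | h
  · have hA : (1 - rexp (-s)) ^ 2 ≤ s := by nlinarith
    have hB : s ≤ Real.sqrt s := by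
      have hs1 : Real.sqrt s ≤ 1 := by
        rw [show (1:ℝ) = Real.sqrt 1 from Real.sqrt_one.symm]
        exact Real.sqrt_le_sqrt h
      nlinarith [Real.sq_sqrt hs, Real.sqrt_nonneg s]
    linarith
  · have hA : (1 - rexp (-s)) ^ 2 ≤ 1 := by nlinarith
    have hB : (1 : ℝ) ≤ Real.sqrt s := by
      rw [show (1:ℝ) = Real.sqrt 1 from (Real.sqrt_one).symm]
      exact Real.sqrt_le_sqrt h
    linarith
end HeatMollify

open HeatMollify

/-- heat-kernel mollification estimate on `H^{1/2}(ℝ^m)`. There is a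
constant `c > 0` such that for every Schwartz function `φ : ℝ^m → ℂ` and every `t > 0`,
`‖φ − φ_t * φ‖²_{L²} ≤ c²·√t·∫ (1+|k|²)^{1/2}|𝓕φ(k)|² dk`, where
`φ_t(x) = (4πt)^{−m/2} e^{−|x|²/(4t)}` is the heat kernel and `*` is convolution. -/
theorem heat_kernel_mollification (m : ℕ) (hm : 1 ≤ m) :
    ∃ c > (0 : ℝ), ∀ (φ : SchwartzMap (EuclideanSpace ℝ (Fin m)) ℂ) (t : ℝ), 0 < t →
      ∫⁻ x : EuclideanSpace ℝ (Fin m),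
          (‖φ x - MeasureTheory.convolution
              (fun y : EuclideanSpace ℝ (Fin m) =>
                (4 * π * t) ^ (-(m : ℝ) / 2) * Real.exp (-‖y‖ ^ 2 / (4 * t)))
              (φ : EuclideanSpace ℝ (Fin m) → ℂ)
              (ContinuousLinearMap.lsmul ℝ ℝ : ℝ →L[ℝ] ℂ →L[ℝ] ℂ) volume x‖₊ : ℝ≥0∞) ^ 2
        ≤ ENNReal.ofReal (c ^ 2 * Real.sqrt t *
            ∫ k : EuclideanSpace ℝ (Fin m),
              (1 + ‖k‖ ^ 2) ^ ((1 : ℝ) / 2) *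
                ‖𝓕 (φ : EuclideanSpace ℝ (Fin m) → ℂ) k‖ ^ 2) := by
  refine ⟨Real.sqrt (2 * π), Real.sqrt_pos.mpr (by positivity), ?_⟩
  intro φ t ht
  set K : EuclideanSpace ℝ (Fin m) → ℝ :=
    fun y => (4 * π * t) ^ (-(m : ℝ) / 2) * Real.exp (-‖y‖ ^ 2 / (4 * t)) with hKdef
  set b : ℂ := (((4 * t)⁻¹ : ℝ) : ℂ) with hb
  have h4t : (0:ℝ) < 4 * t := by linarith
  have hbre : 0 < b.re := by
    rw [hb]
    simpa using inv_pos.mpr h4t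
  have h4πt : (0:ℝ) < 4 * π * t := by positivity
  have hKc_eq : ∀ y : EuclideanSpace ℝ (Fin m),
      ((K y : ℝ) : ℂ) = (((4*π*t) ^ (-(m:ℝ)/2) : ℝ) : ℂ) * Complex.exp (-b * ‖y‖^2) := by
    intro y
    rw [hKdef]
    push_cast [← Complex.ofReal_exp]
    congr 2
    rw [hb]
    push_cast
    ring
  have hGint : Integrable (fun v : EuclideanSpace ℝ (Fin m) => Complex.exp (-b * ‖v‖^2)) := by
    simpa using GaussianFourier.integrable_cexp_neg_mul_sq_norm_add hbre 0 (0 : EuclideanSpace ℝ (Fin m))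
  have hK_int_c : Integrable (fun y : EuclideanSpace ℝ (Fin m) => ((K y : ℝ) : ℂ)) := by
    simp_rw [hKc_eq]
    exact hGint.const_mul _
  have hKnonneg : ∀ y, 0 ≤ K y := fun y =>
    mul_nonneg (Real.rpow_pos_of_pos h4πt _).le (Real.exp_nonneg _)
  have hK_int : Integrable K := by
    have h := hK_int_c.norm
    have : (fun y => ‖((K y : ℝ) : ℂ)‖) = K := by
      funext y
      rw [Complex.norm_real, Real.norm_of_nonneg (hKnonneg y)]
    rwa [this] at h
  have hφ_int : Integrable (⇑φ) := φ.integrable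
  have hψ_eq : ⇑(SchwartzMap.fourierTransformCLM ℂ φ) = 𝓕 ⇑φ :=
    rfl
  have h𝓕φ_int : Integrable (𝓕 ⇑φ) := hψ_eq ▸ (SchwartzMap.fourierTransformCLM ℂ φ).integrable
  set conv : EuclideanSpace ℝ (Fin m) → ℂ :=
    MeasureTheory.convolution K (⇑φ) (ContinuousLinearMap.lsmul ℝ ℝ) volume with hconvdef
  have hconv_eq : conv = fun x => ∫ y, ((K y : ℝ) : ℂ) * φ (x - y) := by
    funext x
    simp only [hconvdef, MeasureTheory.convolution, ContinuousLinearMap.lsmul_apply,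
      Complex.real_smul]
  have hconv_int : Integrable conv :=
    hK_int.integrable_convolution (ContinuousLinearMap.lsmul ℝ ℝ) hφ_int
  have hφ_bdd : BddAbove (Set.range fun x : EuclideanSpace ℝ (Fin m) => ‖φ x‖) :=
    ⟨SchwartzMap.seminorm ℝ 0 0 φ, by
      rintro r ⟨x, rfl⟩
      exact SchwartzMap.norm_le_seminorm ℝ φ x⟩
  have hconv_cont : Continuous conv :=
    hφ_bdd.continuous_convolution_right_of_integrable _ hK_int φ.continuous
  set g : EuclideanSpace ℝ (Fin m) → ℂ := fun x => φ x - conv x with hgdef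
  have hg_int : Integrable g := hφ_int.sub hconv_int
  have hg_cont : Continuous g := φ.continuous.sub hconv_cont
  set Ef : EuclideanSpace ℝ (Fin m) → ℝ := fun ξ => rexp (-(4 * π^2 * t) * ‖ξ‖^2) with hEfdef
  have hfr : (Module.finrank ℝ (EuclideanSpace ℝ (Fin m)) : ℂ) = (m : ℂ) := by
    rw [finrank_euclideanSpace_fin]
  have hxne : ((4*π*t : ℝ) : ℂ) ≠ 0 := by
    exact_mod_cast h4πt.ne'
  have hFK : ∀ ξ : EuclideanSpace ℝ (Fin m),
      𝓕 (fun y : EuclideanSpace ℝ (Fin m) => ((K y : ℝ) : ℂ)) ξ = ((Ef ξ : ℝ) : ℂ) := by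
    intro ξ
    have hre : (fun y : EuclideanSpace ℝ (Fin m) => ((K y : ℝ) : ℂ))
        = fun y => (((4*π*t) ^ (-(m:ℝ)/2) : ℝ) : ℂ) * Complex.exp (-b * ‖y‖^2) :=
      funext hKc_eq
    rw [hre]
    have hsmul : 𝓕 (fun y : EuclideanSpace ℝ (Fin m) =>
          (((4*π*t) ^ (-(m:ℝ)/2) : ℝ) : ℂ) * Complex.exp (-b * ‖y‖^2)) ξ
        = (((4*π*t) ^ (-(m:ℝ)/2) : ℝ) : ℂ)
            * 𝓕 (fun y : EuclideanSpace ℝ (Fin m) => Complex.exp (-b * ‖y‖^2)) ξ := by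
      rw [Real.fourier_eq', Real.fourier_eq']
      simp only [smul_eq_mul]
      rw [← integral_const_mul]
      congr 1 with y
      ring
    rw [hsmul, fourier_gaussian_innerProductSpace hbre ξ]
    have hπb : (π : ℂ)/b = ((4*π*t : ℝ) : ℂ) := by
      rw [hb]
      push_cast
      field_simp
    have hc₀ : (((4*π*t) ^ (-(m:ℝ)/2) : ℝ) : ℂ) = ((4*π*t : ℝ) : ℂ) ^ (-(m:ℂ)/2) := by
      rw [Complex.ofReal_cpow h4πt.le]
      push_cast
      ring_nf
    have hexp : -(π:ℂ)^2 * (‖ξ‖:ℂ)^2 / b = ((-(4 * π^2 * t) * ‖ξ‖^2 : ℝ) : ℂ) := by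
      rw [hb]
      push_cast
      field_simp
    rw [hπb, hc₀, hfr, hexp, ← mul_assoc, ← Complex.cpow_add _ _ hxne,
      show -(m:ℂ)/2 + (m:ℂ)/2 = 0 by ring, Complex.cpow_zero, one_mul]
    simp only [hEfdef, Complex.ofReal_exp]
  have hFconv : ∀ ξ, 𝓕 conv ξ = ((Ef ξ : ℝ) : ℂ) * 𝓕 ⇑φ ξ := by
    intro ξ
    rw [hconv_eq, fourier_conv hK_int_c hφ_int ξ, hFK]
  have hFg : ∀ ξ, 𝓕 g ξ = (1 - ((Ef ξ : ℝ) : ℂ)) * 𝓕 ⇑φ ξ := by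
    intro ξ
    rw [hgdef, fourier_sub hφ_int hconv_int ξ, hFconv]
    ring
  have hEf_pos : ∀ ξ, 0 < Ef ξ := fun ξ => Real.exp_pos _
  have hEf_le : ∀ ξ, Ef ξ ≤ 1 := fun ξ => Real.exp_le_one_iff.mpr (by
    have : (0:ℝ) ≤ 4 * π^2 * t * ‖ξ‖^2 := by positivity
    nlinarith)
  have hEf_cont : Continuous Ef := by
    rw [hEfdef]
    exact Real.continuous_exp.comp (continuous_const.mul (continuous_norm.pow 2))
  have h𝓕g_int : Integrable (𝓕 g) := by
    have h : 𝓕 g = fun ξ => (1 - ((Ef ξ : ℝ) : ℂ)) * 𝓕 ⇑φ ξ := funext hFg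
    rw [h]
    refine h𝓕φ_int.bdd_mul (c := 1) ?_ (Filter.Eventually.of_forall fun ξ => ?_)
    · exact (continuous_const.sub
        (Complex.continuous_ofReal.comp hEf_cont)).aestronglyMeasurable
    · have : (1 - ((Ef ξ : ℝ) : ℂ)) = (((1 - Ef ξ : ℝ)) : ℂ) := by push_cast; ring
      rw [this, Complex.norm_real, Real.norm_of_nonneg (by linarith [hEf_le ξ])]
      linarith [hEf_pos ξ]
  have h2int : Integrable fun x => ‖g x‖^2 := sq_integrable hg_cont hg_int h𝓕g_int
  have hLHS : (∫⁻ x, (↑‖g x‖₊ : ℝ≥0∞)^2) = ENNReal.ofReal (∫ x, ‖g x‖^2) := by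
    rw [MeasureTheory.ofReal_integral_eq_lintegral_ofReal h2int
      (Filter.Eventually.of_forall fun x => sq_nonneg _)]
    exact lintegral_congr fun x => by
      rw [ENNReal.ofReal_pow (norm_nonneg _), ofReal_norm_eq_enorm]; rfl
  -- integrability of the RHS integrand
  set ψ := SchwartzMap.fourierTransformCLM ℂ φ with hψdef
  have hRHS_int : Integrable fun k : EuclideanSpace ℝ (Fin m) =>
      (1 + ‖k‖^2) ^ ((1:ℝ)/2) * ‖𝓕 ⇑φ k‖^2 := by
    have hψb : ∀ k, ‖ψ k‖ ≤ SchwartzMap.seminorm ℝ 0 0 ψ := SchwartzMap.norm_le_seminorm ℝ ψ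
    have hmaj : Integrable fun k : EuclideanSpace ℝ (Fin m) =>
        (SchwartzMap.seminorm ℝ 0 0 ψ : ℝ) * (‖ψ k‖ + ‖k‖ * ‖ψ k‖) := by
      refine Integrable.const_mul ?_ _
      have h1 : Integrable fun k : EuclideanSpace ℝ (Fin m) => ‖ψ k‖ := ψ.integrable.norm
      have h2 : Integrable fun k : EuclideanSpace ℝ (Fin m) => ‖k‖ * ‖ψ k‖ := by
        have := ψ.integrable_pow_mul (volume) 1
        simpa using this
      exact h1.add h2
    have hcont : Continuous fun k : EuclideanSpace ℝ (Fin m) =>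
        (1 + ‖k‖^2) ^ ((1:ℝ)/2) * ‖𝓕 ⇑φ k‖^2 := by
      refine Continuous.mul ?_ ((ψ.continuous.norm.pow 2).congr (by
        intro x; rw [hψ_eq]; rfl))
      refine Continuous.rpow_const (continuous_const.add (continuous_norm.pow 2)) ?_
      intro k
      left
      positivity
    refine hmaj.mono' hcont.aestronglyMeasurable ?_
    filter_upwards with k
    have hnn : (0:ℝ) ≤ (1 + ‖k‖^2) ^ ((1:ℝ)/2) := Real.rpow_nonneg (by positivity) _
    rw [Real.norm_of_nonneg (by positivity)]
    have hbd1 : (1 + ‖k‖^2) ^ ((1:ℝ)/2) ≤ 1 + ‖k‖ := by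
      rw [← Real.sqrt_eq_rpow]
      have : Real.sqrt (1 + ‖k‖^2) ≤ Real.sqrt ((1 + ‖k‖)^2) := by
        apply Real.sqrt_le_sqrt
        nlinarith [norm_nonneg k]
      rwa [Real.sqrt_sq (by positivity)] at this
    have hψk : ‖𝓕 ⇑φ k‖ = ‖ψ k‖ := by rw [hψ_eq]
    rw [hψk]
    have : (1 + ‖k‖^2) ^ ((1:ℝ)/2) * ‖ψ k‖^2 ≤ (1 + ‖k‖) * ‖ψ k‖^2 :=
      mul_le_mul_of_nonneg_right hbd1 (sq_nonneg _)
    refine this.trans ?_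
    have hexpand : (1 + ‖k‖) * ‖ψ k‖^2 = (‖ψ k‖ + ‖k‖ * ‖ψ k‖) * ‖ψ k‖ := by ring
    rw [hexpand, mul_comm (SchwartzMap.seminorm ℝ 0 0 ψ : ℝ)]
    exact mul_le_mul_of_nonneg_left (hψb k)
      (by positivity)
  -- pointwise bound
  have hpt : ∀ ξ : EuclideanSpace ℝ (Fin m),
      ‖𝓕 g ξ‖^2 ≤ 2*π*Real.sqrt t * ((1+‖ξ‖^2) ^ ((1:ℝ)/2) * ‖𝓕 ⇑φ ξ‖^2) := by
    intro ξ
    have h1 : ‖𝓕 g ξ‖ = (1 - Ef ξ) * ‖𝓕 ⇑φ ξ‖ := by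
      rw [hFg ξ, norm_mul]
      congr 1
      have : (1 - ((Ef ξ : ℝ) : ℂ)) = (((1 - Ef ξ : ℝ)) : ℂ) := by push_cast; ring
      rw [this, Complex.norm_real, Real.norm_of_nonneg (by linarith [hEf_le ξ])]
    have hs : (0:ℝ) ≤ 4 * π^2 * t * ‖ξ‖^2 := by positivity
    have h2 : (1 - Ef ξ)^2 ≤ Real.sqrt (4 * π^2 * t * ‖ξ‖^2) := by
      have := one_sub_exp_sq_le hs
      rw [hEfdef]
      simpa [neg_mul] using this
    have h3 : Real.sqrt (4 * π^2 * t * ‖ξ‖^2) = 2*π*Real.sqrt t*‖ξ‖ := by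
      have : 4 * π^2 * t * ‖ξ‖^2 = ((2*π*‖ξ‖)^2) * t := by ring
      rw [this, Real.sqrt_mul (sq_nonneg _), Real.sqrt_sq (by positivity)]
      ring
    have h4 : ‖ξ‖ ≤ (1+‖ξ‖^2) ^ ((1:ℝ)/2) := by
      rw [← Real.sqrt_eq_rpow]
      have : ‖ξ‖ = Real.sqrt (‖ξ‖^2) := (Real.sqrt_sq (norm_nonneg _)).symm
      rw [this]
      exact Real.sqrt_le_sqrt (by nlinarith [norm_nonneg ξ])
    have h5 : ‖𝓕 g ξ‖^2 = (1 - Ef ξ)^2 * ‖𝓕 ⇑φ ξ‖^2 := by rw [h1]; ring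
    rw [h5]
    calc (1 - Ef ξ)^2 * ‖𝓕 ⇑φ ξ‖^2
        ≤ (2*π*Real.sqrt t*‖ξ‖) * ‖𝓕 ⇑φ ξ‖^2 := by
          refine mul_le_mul_of_nonneg_right ?_ (sq_nonneg _)
          rw [← h3]; exact h2
      _ ≤ (2*π*Real.sqrt t*((1+‖ξ‖^2) ^ ((1:ℝ)/2))) * ‖𝓕 ⇑φ ξ‖^2 := by
          refine mul_le_mul_of_nonneg_right ?_ (sq_nonneg _)
          have hc : (0:ℝ) ≤ 2*π*Real.sqrt t := by positivity
          exact mul_le_mul_of_nonneg_left h4 hc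
      _ = 2*π*Real.sqrt t * ((1+‖ξ‖^2) ^ ((1:ℝ)/2) * ‖𝓕 ⇑φ ξ‖^2) := by ring
  have hineq : ∫ ξ, ‖𝓕 g ξ‖^2
      ≤ 2*π*Real.sqrt t * ∫ k, (1+‖k‖^2) ^ ((1:ℝ)/2) * ‖𝓕 ⇑φ k‖^2 := by
    rw [← integral_const_mul]
    exact integral_mono_of_nonneg (Filter.Eventually.of_forall fun ξ => sq_nonneg _)
      (hRHS_int.const_mul _) (Filter.Eventually.of_forall hpt)
  calc ∫⁻ x, (↑‖g x‖₊ : ℝ≥0∞)^2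
      = ENNReal.ofReal (∫ x, ‖g x‖^2) := hLHS
    _ = ENNReal.ofReal (∫ ξ, ‖𝓕 g ξ‖^2) := by
        rw [plancherel hg_cont hg_int h𝓕g_int]
    _ ≤ ENNReal.ofReal (2*π*Real.sqrt t *
          ∫ k, (1+‖k‖^2) ^ ((1:ℝ)/2) * ‖𝓕 ⇑φ k‖^2) := ENNReal.ofReal_le_ofReal hineq
    _ = ENNReal.ofReal (Real.sqrt (2*π) ^ 2 * Real.sqrt t *
          ∫ k, (1+‖k‖^2) ^ ((1:ℝ)/2) * ‖𝓕 ⇑φ k‖^2) := by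
        rw [Real.sq_sqrt (by positivity)]
end
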